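/- For any set Γ of permutations and any n ≥ 1, Σ_{π ∈ S_n} s^{occ_{Γ^r}(π)} t^{ides(π)+1} = t^{n+1} · Σ_{π ∈ S_n} s^{occ_Γ(π)} t^{-(ides(π)+1)} (as an identity of Laurent polynomials), where Γ^r = {σ^r : σ ∈ Γ}. -/

import Mathlib

open Finset

/-- The 1-based word of values of a permutation `π ∈ S_n`: `val π i` is the value
(in `{1, …, n}`) of `π` at the 1-based position `i`, and `0` if `i` is out of range. -/
def pval {n : ℕ} (π : Equiv.Perm (Fin n)) (i : ℕ) : ℕ :=
  if h : 1 ≤ i ∧ i - 1 < n then (π ⟨i - 1, h.2⟩ : ℕ) + 1 else 0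

/-- The descent set of `π ∈ S_n`: the set of `i ∈ [n-1]` with `π_i > π_{i+1}`. -/
def desSet {n : ℕ} (π : Equiv.Perm (Fin n)) : Finset ℕ :=
  (Finset.Icc 1 (n - 1)).filter (fun i => pval π (i + 1) < pval π i)

/-- The descent number. -/
def des {n : ℕ} (π : Equiv.Perm (Fin n)) : ℕ := (desSet π).card

/-- The major index: the sum of the descents. -/
def maj {n : ℕ} (π : Equiv.Perm (Fin n)) : ℕ := ∑ i ∈ desSet π, i

/-- The comajor index: `comaj π = ∑_{i ∈ Des π} (n - i)`. -/
def comaj {n : ℕ} (π : Equiv.Perm (Fin n)) : ℕ := ∑ i ∈ desSet π, (n - i)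

/-- The peak number: the number of `i` with `2 ≤ i ≤ n-1` and `π_{i-1} < π_i > π_{i+1}`. -/
def pk {n : ℕ} (π : Equiv.Perm (Fin n)) : ℕ :=
  ((Finset.Icc 2 (n - 1)).filter
    (fun i => pval π (i - 1) < pval π i ∧ pval π (i + 1) < pval π i)).card

/-- The left peak number: the number of `i ∈ [n-1]` which are peaks of `π`, or `i = 1`
when `1` is a descent (equivalently, peaks of `0π`; note `pval π 0 = 0`). -/
def lpk {n : ℕ} (π : Equiv.Perm (Fin n)) : ℕ :=
  ((Finset.Icc 1 (n - 1)).filter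
    (fun i => pval π (i - 1) < pval π i ∧ pval π (i + 1) < pval π i)).card

/-- Inverse descent number. -/
def ides {n : ℕ} (π : Equiv.Perm (Fin n)) : ℕ := des π⁻¹

/-- Inverse major index. -/
def imaj {n : ℕ} (π : Equiv.Perm (Fin n)) : ℕ := maj π⁻¹

/-- Inverse comajor index. -/
def icomaj {n : ℕ} (π : Equiv.Perm (Fin n)) : ℕ := comaj π⁻¹

/-- Inverse peak number. -/
def ipk {n : ℕ} (π : Equiv.Perm (Fin n)) : ℕ := pk π⁻¹

/-- Inverse left peak number. -/
def ilpk {n : ℕ} (π : Equiv.Perm (Fin n)) : ℕ := lpk π⁻¹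

/-- The reverse `π^r` of `π`, with `(π^r)_i = π_{n+1-i}`. -/
def prev {n : ℕ} (π : Equiv.Perm (Fin n)) : Equiv.Perm (Fin n) :=
  (Fin.revPerm : Equiv.Perm (Fin n)).trans π

/-- The complement `π^c` of `π`, with `(π^c)_i = n + 1 - π_i`. -/
def pcomp {n : ℕ} (π : Equiv.Perm (Fin n)) : Equiv.Perm (Fin n) :=
  π.trans (Fin.revPerm : Equiv.Perm (Fin n))

/-- The reverse-complement `π^{rc} = (π^r)^c` of `π`. -/
def prc {n : ℕ} (π : Equiv.Perm (Fin n)) : Equiv.Perm (Fin n) := pcomp (prev π)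


/-- `IsOcc σ π i` says that the factor of `π` of length `m` starting at the 0-based
position `i` is an occurrence of the consecutive pattern `σ ∈ S_m`, i.e. its
standardization is `σ` (equivalently, it is order-isomorphic to the word of `σ`). -/
def IsOcc {n m : ℕ} (σ : Equiv.Perm (Fin m)) (π : Equiv.Perm (Fin n)) (i : ℕ) : Prop :=
  ∃ h : i + m ≤ n, ∀ s t : Fin m,
    (σ s < σ t ↔ π ⟨i + s.val, by omega⟩ < π ⟨i + t.val, by omega⟩)

/-- `occ Γ π` is the number of occurrences in `π` of consecutive patterns from the
set `Γ` (given as a family of sets of patterns of each length `m`): the number of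
pairs `(m, i)` such that some `σ ∈ Γ m` occurs in `π` at position `i`. -/
noncomputable def occ (Γ : ∀ m : ℕ, Set (Equiv.Perm (Fin m))) {n : ℕ}
    (π : Equiv.Perm (Fin n)) : ℕ :=
  Set.ncard { p : ℕ × ℕ | ∃ σ ∈ Γ p.1, IsOcc σ π p.2 }

lemma prev_prev {n : ℕ} (π : Equiv.Perm (Fin n)) : prev (prev π) = π := by
  ext x
  simp [prev]

lemma prev_inv {n : ℕ} (π : Equiv.Perm (Fin n)) : (prev π)⁻¹ = pcomp π⁻¹ := by
  ext x
  simp only [prev, pcomp]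
  rfl

lemma des_le {n : ℕ} (π : Equiv.Perm (Fin n)) : des π ≤ n - 1 := by
  classical
  have : desSet π ⊆ Finset.Icc 1 (n - 1) := Finset.filter_subset _ _
  calc des π ≤ (Finset.Icc 1 (n - 1)).card := Finset.card_le_card this
    _ = n - 1 := by simp

lemma pval_eq {n : ℕ} (π : Equiv.Perm (Fin n)) {i : ℕ} (h1 : 1 ≤ i) (h2 : i - 1 < n) :
    pval π i = (π ⟨i - 1, h2⟩ : ℕ) + 1 := by
  simp [pval, h1, h2]

lemma desSet_pcomp {n : ℕ} (π : Equiv.Perm (Fin n)) :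
    desSet (pcomp π) = Finset.Icc 1 (n - 1) \ desSet π := by
  classical
  ext i
  simp only [desSet, Finset.mem_filter, Finset.mem_sdiff, Finset.mem_Icc]
  constructor
  · rintro ⟨hi, hlt⟩
    obtain ⟨hi1, hi2⟩ := hi
    refine ⟨⟨hi1, hi2⟩, ?_⟩
    rw [not_and]
    intro _
    have hn2 : 2 ≤ n := by omega
    have hA : i - 1 < n := by omega
    have hB : (i + 1) - 1 < n := by omega
    have e1 := pval_eq (pcomp π) hi1 hA
    have e2 := pval_eq (pcomp π) (by omega : 1 ≤ i + 1) hB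
    have f1 := pval_eq π hi1 hA
    have f2 := pval_eq π (by omega : 1 ≤ i + 1) hB
    have hne : π ⟨(i+1)-1, hB⟩ ≠ π ⟨i-1, hA⟩ := by
      intro h
      have := π.injective h
      simp only [Fin.mk.injEq] at this
      omega
    have hane : (π ⟨(i+1)-1, hB⟩ : ℕ) ≠ (π ⟨i-1, hA⟩ : ℕ) := fun h => hne (Fin.ext h)
    have c1 : pcomp π ⟨i-1, hA⟩ = (π ⟨i-1, hA⟩).rev := rfl
    have c2 : pcomp π ⟨(i+1)-1, hB⟩ = (π ⟨(i+1)-1, hB⟩).rev := rfl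
    rw [e1, e2, c1, c2] at hlt
    rw [f1, f2]
    simp only [Fin.val_rev] at hlt
    have b1 : (π ⟨i-1, hA⟩ : ℕ) < n := (π _).isLt
    have b2 : (π ⟨(i+1)-1, hB⟩ : ℕ) < n := (π _).isLt
    omega
  · rintro ⟨hi, hnot⟩
    obtain ⟨hi1, hi2⟩ := hi
    refine ⟨⟨hi1, hi2⟩, ?_⟩
    rw [not_and] at hnot
    have hnlt := hnot ⟨hi1, hi2⟩
    have hn2 : 2 ≤ n := by omega
    have hA : i - 1 < n := by omega
    have hB : (i + 1) - 1 < n := by omega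
    have e1 := pval_eq (pcomp π) hi1 hA
    have e2 := pval_eq (pcomp π) (by omega : 1 ≤ i + 1) hB
    have f1 := pval_eq π hi1 hA
    have f2 := pval_eq π (by omega : 1 ≤ i + 1) hB
    have hne : π ⟨(i+1)-1, hB⟩ ≠ π ⟨i-1, hA⟩ := by
      intro h
      have := π.injective h
      simp only [Fin.mk.injEq] at this
      omega
    have hane : (π ⟨(i+1)-1, hB⟩ : ℕ) ≠ (π ⟨i-1, hA⟩ : ℕ) := fun h => hne (Fin.ext h)
    have c1 : pcomp π ⟨i-1, hA⟩ = (π ⟨i-1, hA⟩).rev := rfl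
    have c2 : pcomp π ⟨(i+1)-1, hB⟩ = (π ⟨(i+1)-1, hB⟩).rev := rfl
    rw [f1, f2] at hnlt
    rw [e1, e2, c1, c2]
    simp only [Fin.val_rev]
    have b1 : (π ⟨i-1, hA⟩ : ℕ) < n := (π _).isLt
    have b2 : (π ⟨(i+1)-1, hB⟩ : ℕ) < n := (π _).isLt
    omega

lemma des_pcomp {n : ℕ} (π : Equiv.Perm (Fin n)) : des (pcomp π) = (n - 1) - des π := by
  classical
  have hsub : desSet π ⊆ Finset.Icc 1 (n - 1) := Finset.filter_subset _ _
  rw [des, desSet_pcomp, Finset.card_sdiff_of_subset hsub]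
  simp [des]

lemma ides_prev {n : ℕ} (π : Equiv.Perm (Fin n)) : ides (prev π) = (n - 1) - ides π := by
  rw [ides, prev_inv, des_pcomp]
  rfl

lemma isOcc_prev {n m : ℕ} (σ : Equiv.Perm (Fin m)) (π : Equiv.Perm (Fin n)) {i : ℕ}
    (h : i + m ≤ n) : IsOcc (prev σ) π i ↔ IsOcc σ (prev π) (n - m - i) := by
  constructor
  · rintro ⟨h', H⟩
    refine ⟨by omega, fun a b => ?_⟩
    have := H a.rev b.rev
    have ea : prev σ a.rev = σ a := by
      simp [prev, Fin.rev_rev]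
    have eb : prev σ b.rev = σ b := by
      simp [prev, Fin.rev_rev]
    rw [ea, eb] at this
    rw [this]
    have key : ∀ c : Fin m,
        π ⟨i + (c.rev : ℕ), by omega⟩ = prev π ⟨n - m - i + (c : ℕ), by omega⟩ := by
      intro c
      simp only [prev, Equiv.trans_apply, Fin.revPerm_apply]
      congr 1
      apply Fin.ext
      simp only [Fin.val_rev]
      omega
    rw [key a, key b]
  · rintro ⟨h', H⟩
    refine ⟨h, fun a b => ?_⟩
    have := H a.rev b.rev
    simp only [prev, Equiv.trans_apply, Fin.revPerm_apply] at this ⊢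
    rw [this]
    have key : ∀ c : Fin m,
        Fin.rev ⟨n - m - i + ((c : Fin m).rev : ℕ), by omega⟩ = (⟨i + (c : ℕ), by omega⟩ : Fin n) := by
      intro c
      apply Fin.ext
      simp only [Fin.val_rev]
      omega
    rw [key a, key b]

lemma occ_prev_image (Γ : ∀ m : ℕ, Set (Equiv.Perm (Fin m))) {n : ℕ}
    (π : Equiv.Perm (Fin n)) :
    occ (fun m => prev '' Γ m) π = occ Γ (prev π) := by
  classical
  rw [occ, occ]
  have himg : { p : ℕ × ℕ | ∃ σ ∈ (fun m => prev '' Γ m) p.1, IsOcc σ π p.2 }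
      = (fun p : ℕ × ℕ => (p.1, n - p.1 - p.2)) ''
        { p : ℕ × ℕ | ∃ σ ∈ Γ p.1, IsOcc σ (prev π) p.2 } := by
    ext ⟨m, i⟩
    simp only [Set.mem_setOf_eq, Set.mem_image, Prod.mk.injEq, Prod.exists]
    constructor
    · rintro ⟨σ, ⟨τ, hτ, rfl⟩, hocc⟩
      have hbd : i + m ≤ n := hocc.1
      refine ⟨m, n - m - i, ⟨τ, hτ, (isOcc_prev τ π hbd).mp hocc⟩, rfl, by omega⟩
    · rintro ⟨m', j, ⟨τ, hτ, hocc⟩, rfl, rfl⟩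
      have hbd : j + m' ≤ n := hocc.1
      have hi : (n - m' - (n - m' - j)) = j := by omega
      refine ⟨prev τ, ⟨τ, hτ, rfl⟩, ?_⟩
      rw [isOcc_prev τ π (by omega : (n - m' - j) + m' ≤ n), hi]
      exact hocc
  rw [himg]
  apply Set.ncard_image_of_injOn
  rintro ⟨m, i⟩ hi ⟨m', i'⟩ hi' heq
  simp only [Set.mem_setOf_eq] at hi hi'
  obtain ⟨_, _, h1⟩ := hi
  obtain ⟨_, _, h2⟩ := hi'
  have b1 : i + m ≤ n := h1.1
  have b2 : i' + m' ≤ n := h2.1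
  simp only [Prod.mk.injEq] at heq
  obtain ⟨rfl, h⟩ := heq
  have : i = i' := by omega
  simp [this]

/-- For any set `Γ` of permutations and any `n ≥ 1`,
`Σ_{π ∈ S_n} s^{occ_{Γ^r}(π)} t^{ides(π)+1} = t^{n+1} · Σ_{π ∈ S_n} s^{occ_Γ(π)} t^{-(ides(π)+1)}`
as an identity of Laurent polynomials (stated for all rational `s` and all nonzero
rational `t`). -/
theorem occ_r_ides_poly (Γ : ∀ m : ℕ, Set (Equiv.Perm (Fin m))) {n : ℕ} (hn : 1 ≤ n)
    (s t : ℚ) (ht : t ≠ 0) :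
    ∑ π : Equiv.Perm (Fin n), s ^ occ (fun m => prev '' Γ m) π * t ^ (ides π + 1) =
      t ^ (n + 1) * ∑ π : Equiv.Perm (Fin n), s ^ occ Γ π * t⁻¹ ^ (ides π + 1) := by
  classical
  rw [Finset.mul_sum]
  refine Fintype.sum_equiv (Function.Involutive.toPerm prev (show Function.Involutive (prev (n := n)) from prev_prev)) _ _ (fun π => ?_)
  simp only [Function.Involutive.coe_toPerm]
  rw [occ_prev_image, ides_prev]
  have hle : ides π ≤ n - 1 := des_le _
  have hexp : (n - 1 - ides π) + 1 = n - ides π := by omega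
  rw [hexp]
  have key : t ^ (n + 1) * (t⁻¹) ^ (n - ides π) = t ^ (ides π + 1) := by
    rw [inv_pow, ← div_eq_mul_inv, div_eq_iff (pow_ne_zero _ ht), ← pow_add]
    congr 1
    omega
  rw [← key]
  ring
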